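/- (Theorem 2, L² lower bound) Let p ≥ 0 be an integer. There exists a constant C₂ > 0, depending only on p (independent of h, u and u^R), with the following property. Let a < b, let N be a positive integer, h = (b−a)/N, x_i = a + i h. Let u : [a,b] → ℝ be (p+1)-times continuously differentiable, and let u^R : (a,b) → ℝ coincide on each cell (x_i, x_{i+1}) with a polynomial of degree at most p. For 1 ≤ i ≤ N−1 and 0 ≤ k ≤ p set J^k_i = (d^k/dx^k)u^R(x_i⁺) − (d^k/dx^k)u^R(x_i⁻) and D^k_i = J^k_i / h^{p+1−k}. Then ( ∫_a^b (u − u^R)² )^{1/2} ≥ h^{p+1} [ ( Σ_{i=1}^{N−1} h · Q(D^0_i, …, D^p_i) )^{1/2} − C₂ ( ∫_a^b (u^{(p+1)}(x))² dx )^{1/2} ]. -/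

import Mathlib

open MeasureTheory Polynomial

/-- `fd p d ξ = (1/2) Σ_{k=0}^p (d_k/k!) ξ^k`. -/
noncomputable def fd (p : ℕ) (d : Fin (p+1) → ℝ) (ξ : ℝ) : ℝ :=
  (1/2) * ∑ k : Fin (p+1), d k / (Nat.factorial k) * ξ ^ (k : ℕ)

/-- The error functional whose infimum over polynomials of degree ≤ p defines `Qform`. -/
noncomputable def Qerr (p : ℕ) (d : Fin (p+1) → ℝ) (v : Polynomial ℝ) : ℝ :=
  (∫ ξ in (-(1:ℝ)/2)..0, (v.eval ξ + fd p d ξ)^2) +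
  (∫ ξ in (0:ℝ)..(1/2), (v.eval ξ - fd p d ξ)^2)

/-- `Q(d) = inf_{v ∈ P} Qerr p d v`. -/
noncomputable def Qform (p : ℕ) (d : Fin (p+1) → ℝ) : ℝ :=
  sInf {q : ℝ | ∃ v : Polynomial ℝ, v.natDegree ≤ p ∧ q = Qerr p d v}

/-- The scaled jump vector `(D⁰,…,Dᵖ)` at a node `xi`, where `ql`/`qr` are the
polynomial pieces to the left/right of `xi`:
`Dᵏ = ((d^k/dx^k) qr(xi) - (d^k/dx^k) ql(xi)) / h^{p+1-k}`. -/
noncomputable def Dvec (p : ℕ) (h xi : ℝ) (ql qr : Polynomial ℝ) : Fin (p+1) → ℝ :=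
  fun k => ((Polynomial.derivative^[(k:ℕ)] qr).eval xi -
            (Polynomial.derivative^[(k:ℕ)] ql).eval xi) / h^(p+1-(k:ℕ))

open Set


-- optimization lemma A ≤ (X+Y)^2
lemma opt_sq_le {A X Y : ℝ} (hX : 0 ≤ X) (hY : 0 ≤ Y)
    (h : ∀ t : ℝ, 0 < t → A ≤ (1+t)*X^2 + (1+1/t)*Y^2) : A ≤ (X+Y)^2 := by
  rcases hX.eq_or_lt with hX0 | hX0
  · -- X = 0
    have : A ≤ Y^2 := by
      refine le_of_forall_pos_le_add fun ε hε => ?_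
      have ht : (0:ℝ) < (Y^2+1)/ε := by positivity
      have := h _ ht
      have h2 : (1+1/((Y^2+1)/ε))*Y^2 ≤ Y^2 + ε := by
        rw [add_mul, one_mul]
        have : 1/((Y^2+1)/ε)*Y^2 ≤ ε := by
          rw [div_div_eq_mul_div, one_mul, div_mul_eq_mul_div, div_le_iff₀ (by positivity)]
          nlinarith [sq_nonneg Y]
        linarith
      calc A ≤ (1+(Y^2+1)/ε)*X^2 + (1+1/((Y^2+1)/ε))*Y^2 := this
        _ ≤ Y^2 + ε := by rw [← hX0]; simpa using h2
    nlinarith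
  rcases hY.eq_or_lt with hY0 | hY0
  · -- Y = 0
    have : A ≤ X^2 := by
      refine le_of_forall_pos_le_add fun ε hε => ?_
      have ht : (0:ℝ) < ε/(X^2+1) := by positivity
      have := h _ ht
      have h2 : (1+ε/(X^2+1))*X^2 ≤ X^2 + ε := by
        rw [add_mul, one_mul]
        have : ε/(X^2+1)*X^2 ≤ ε := by
          rw [div_mul_eq_mul_div, div_le_iff₀ (by positivity)]
          nlinarith [sq_nonneg X, hε.le]
        linarith
      calc A ≤ (1+ε/(X^2+1))*X^2 + (1+1/(ε/(X^2+1)))*Y^2 := this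
        _ ≤ X^2 + ε := by rw [← hY0]; simpa using h2
    nlinarith
  · have := h (Y/X) (by positivity)
    have hX' : X ≠ 0 := ne_of_gt hX0
    have hY' : Y ≠ 0 := ne_of_gt hY0
    have : (1+Y/X)*X^2 + (1+1/(Y/X))*Y^2 = (X+Y)^2 := by
      field_simp
      ring
    linarith [h (Y/X) (by positivity : (0:ℝ) < Y/X), this ▸ h (Y/X) (by positivity : (0:ℝ) < Y/X)]

-- Cauchy-Schwarz-lite
lemma opt_mul_le {P Q R : ℝ} (hQ : 0 ≤ Q) (hR : 0 ≤ R)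
    (h : ∀ s : ℝ, 0 < s → P ≤ (s*Q^2 + R^2/s)/2) : P ≤ Q*R := by
  rcases hQ.eq_or_lt with hQ0 | hQ0
  · have : P ≤ 0 := by
      refine le_of_forall_pos_le_add fun ε hε => ?_
      have ht : (0:ℝ) < (R^2+1)/(2*ε) := by positivity
      have := h _ ht
      rw [← hQ0] at this
      have h2 : R^2/((R^2+1)/(2*ε))/2 ≤ ε := by
        rw [div_div_eq_mul_div, div_div, div_le_iff₀ (by positivity)]
        nlinarith [sq_nonneg R]
      calc P ≤ (((R^2+1)/(2*ε))*0^2 + R^2/((R^2+1)/(2*ε)))/2 := this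
        _ ≤ 0 + ε := by rw [add_div]; simpa using h2
    nlinarith
  rcases hR.eq_or_lt with hR0 | hR0
  · have : P ≤ 0 := by
      refine le_of_forall_pos_le_add fun ε hε => ?_
      have ht : (0:ℝ) < 2*ε/Q^2 := by positivity
      have := h _ ht
      rw [← hR0] at this
      have h2 : (2*ε/Q^2)*Q^2/2 ≤ ε := by
        rw [div_mul_cancel₀ _ (by positivity : Q^2 ≠ 0)]
        linarith
      calc P ≤ ((2*ε/Q^2)*Q^2 + 0^2/(2*ε/Q^2))/2 := this
        _ ≤ 0 + ε := by rw [add_div]; simpa using h2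
    nlinarith
  · have := h (R/Q) (by positivity)
    have heq : ((R/Q)*Q^2 + R^2/(R/Q))/2 = Q*R := by
      field_simp
      ring
    linarith [heq ▸ this]


lemma ae_restrict_of_Ioo {c d : ℝ} {f g : ℝ → ℝ}
    (hfg : ∀ x ∈ Set.Ioo c d, f x = g x) :
    f =ᵐ[volume.restrict (Set.Ioc c d)] g := by
  rw [Filter.EventuallyEq, ae_iff]
  rw [Measure.restrict_apply' measurableSet_Ioc]
  refine measure_mono_null (t := {d}) ?_ Real.volume_singleton
  rintro x ⟨hx, hxm⟩
  by_contra hxd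
  exact hx (hfg x ⟨hxm.1, lt_of_le_of_ne hxm.2 hxd⟩)

lemma intervalIntegral_congr_Ioo {c d : ℝ} (hcd : c ≤ d) {f g : ℝ → ℝ}
    (hfg : ∀ x ∈ Set.Ioo c d, f x = g x) :
    ∫ x in c..d, f x = ∫ x in c..d, g x := by
  rw [intervalIntegral.integral_of_le hcd, intervalIntegral.integral_of_le hcd]
  exact integral_congr_ae (ae_restrict_of_Ioo hfg)

lemma intervalIntegrable_congr_Ioo {c d : ℝ} (hcd : c ≤ d) {f g : ℝ → ℝ}
    (hfg : ∀ x ∈ Set.Ioo c d, f x = g x) (hf : IntervalIntegrable f volume c d) :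
    IntervalIntegrable g volume c d := by
  rw [intervalIntegrable_iff_integrableOn_Ioc_of_le hcd] at hf ⊢
  exact hf.congr (ae_restrict_of_Ioo hfg)

lemma uIcc_sub_uIcc {a b c d : ℝ} (hac : a ≤ c) (hcd : c ≤ d) (hdb : d ≤ b) :
    Set.uIcc c d ⊆ Set.uIcc a b := by
  rw [Set.uIcc_of_le hcd, Set.uIcc_of_le (hac.trans (hcd.trans hdb))]
  exact Set.Icc_subset_Icc hac hdb

lemma integral_le_of_subinterval {a b c d : ℝ} (hac : a ≤ c) (hcd : c ≤ d) (hdb : d ≤ b)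
    {F : ℝ → ℝ} (hF : ∀ x, 0 ≤ F x) (hFi : IntervalIntegrable F volume a b) :
    ∫ x in c..d, F x ≤ ∫ x in a..b, F x := by
  have h1 : IntervalIntegrable F volume a c :=
    hFi.mono_set (uIcc_sub_uIcc le_rfl hac (hcd.trans hdb))
  have h2 : IntervalIntegrable F volume c d := hFi.mono_set (uIcc_sub_uIcc hac hcd hdb)
  have h3 : IntervalIntegrable F volume d b :=
    hFi.mono_set (uIcc_sub_uIcc (hac.trans hcd) hdb le_rfl)
  have e1 : (∫ x in a..c, F x) + ∫ x in c..d, F x = ∫ x in a..d, F x :=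
    intervalIntegral.integral_add_adjacent_intervals h1 h2
  have e2 : (∫ x in a..d, F x) + ∫ x in d..b, F x = ∫ x in a..b, F x :=
    intervalIntegral.integral_add_adjacent_intervals (h1.trans h2) h3
  have n1 : 0 ≤ ∫ x in a..c, F x := intervalIntegral.integral_nonneg hac fun x _ => hF x
  have n3 : 0 ≤ ∫ x in d..b, F x := intervalIntegral.integral_nonneg hdb fun x _ => hF x
  linarith



lemma integral_abs_le_sqrt {c d : ℝ} (hcd : c ≤ d) {f : ℝ → ℝ}
    (hf : IntervalIntegrable f volume c d)
    (hf2 : IntervalIntegrable (fun x => (f x)^2) volume c d) :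
    (∫ t in c..d, |f t|) ≤ Real.sqrt (d-c) * Real.sqrt (∫ t in c..d, (f t)^2) := by
  have hI2 : 0 ≤ ∫ t in c..d, (f t)^2 :=
    intervalIntegral.integral_nonneg hcd fun x _ => sq_nonneg _
  refine opt_mul_le (Real.sqrt_nonneg _) (Real.sqrt_nonneg _) fun s hs => ?_
  rw [Real.sq_sqrt (by linarith : (0:ℝ) ≤ d - c), Real.sq_sqrt hI2]
  have hint : IntervalIntegrable (fun x => s/2 + (1/(2*s)) * (f x)^2) volume c d :=
    intervalIntegrable_const.add (hf2.const_mul _)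
  have hmono : (∫ t in c..d, |f t|) ≤ ∫ t in c..d, (s/2 + (1/(2*s)) * (f t)^2) := by
    apply intervalIntegral.integral_mono_on hcd hf.abs hint
    intro x _
    have h1 : 0 < 2*s := by linarith
    rw [← sub_nonneg]
    have : s/2 + 1/(2*s) * (f x)^2 - |f x| = (|f x| - s)^2 / (2*s) := by
      field_simp
      nlinarith [sq_abs (f x)]
    rw [this]
    positivity
  have hcalc : (∫ t in c..d, (s/2 + (1/(2*s)) * (f t)^2))
      = (d-c)*(s/2) + (1/(2*s)) * ∫ t in c..d, (f t)^2 := by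
    rw [intervalIntegral.integral_add intervalIntegrable_const (hf2.const_mul _),
      intervalIntegral.integral_const, intervalIntegral.integral_const_mul]
    simp [smul_eq_mul, mul_comm]
  rw [hcalc] at hmono
  calc (∫ t in c..d, |f t|) ≤ (d-c)*(s/2) + (1/(2*s)) * ∫ t in c..d, (f t)^2 := hmono
    _ = (s*(d-c) + (∫ t in c..d, (f t)^2)/s)/2 := by field_simp


lemma poly_taylor_expand {p : ℕ} (r : Polynomial ℝ) (hr : r.natDegree ≤ p) (c s : ℝ) :
    r.eval (c + s) = ∑ k ∈ Finset.range (p+1),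
      ((Polynomial.derivative^[k] r).eval c) / (Nat.factorial k) * s^k := by
  have h1 : r.eval (c + s) = (Polynomial.taylor c r).eval s := by
    rw [Polynomial.taylor_eval, add_comm]
  rw [h1, Polynomial.eval_eq_sum_range' (lt_of_le_of_lt
    (by rw [Polynomial.natDegree_taylor]; exact hr) (Nat.lt_succ_self p))]
  apply Finset.sum_congr rfl
  intro k _
  rw [Polynomial.taylor_coeff]
  congr 1
  have h2 : (Nat.factorial k) • (Polynomial.hasseDeriv k r) = Polynomial.derivative^[k] r := by
    have := congrFun (Polynomial.factorial_smul_hasseDeriv (R := ℝ) k) r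
    simpa using this
  have h3 : ((Nat.factorial k) • (Polynomial.hasseDeriv k r)).eval c
      = (Nat.factorial k : ℝ) * (Polynomial.hasseDeriv k r).eval c := by
    rw [nsmul_eq_mul]; simp
  rw [← h2, h3]
  have : (Nat.factorial k : ℝ) ≠ 0 := Nat.cast_ne_zero.mpr (Nat.factorial_ne_zero k)
  field_simp


-- L3: Taylor theorem with integral remainder
lemma taylor_integral_remainder' {a b : ℝ} (hab : a < b) {p : ℕ} {u : ℝ → ℝ}
    (hu : ContDiffOn ℝ (p+1) u (Set.Icc a b)) {x₀ x : ℝ}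
    (hx₀ : x₀ ∈ Set.Ioo a b) (hx : x ∈ Set.Ioo a b) :
    u x - taylorWithinEval u p (Set.Icc a b) x₀ x =
      ∫ t in x₀..x, ((x - t)^p / (Nat.factorial p)) *
        iteratedDerivWithin (p+1) u (Set.Icc a b) t := by
  set f := iteratedDerivWithin (p+1) u (Set.Icc a b) with hf
  have huIcc : Set.uIcc x₀ x ⊆ Set.Ioo a b :=
    Set.OrdConnected.uIcc_subset Set.ordConnected_Ioo hx₀ hx
  have hcont : ContinuousOn f (Set.Icc a b) :=
    hu.continuousOn_iteratedDerivWithin le_rfl (uniqueDiffOn_Icc hab)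
  have hderiv : ∀ t ∈ Set.uIcc x₀ x,
      HasDerivAt (fun y => taylorWithinEval u p (Set.Icc a b) y x)
        ((((Nat.factorial p : ℝ))⁻¹ * (x - t) ^ p) • f t) t := by
    intro t ht
    apply taylorWithinEval_hasDerivAt_Ioo (n := p) x hab (huIcc ht)
      (hu.of_le (by exact_mod_cast Nat.le_succ p))
    exact (hu.differentiableOn_iteratedDerivWithin (by exact_mod_cast Nat.lt_succ_self p)
      (uniqueDiffOn_Icc hab)).mono Set.Ioo_subset_Icc_self
  have hint : IntervalIntegrable (fun t => (((Nat.factorial p : ℝ))⁻¹ * (x - t) ^ p) • f t) volume x₀ x := by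
    apply ContinuousOn.intervalIntegrable
    simp only [smul_eq_mul]
    apply ContinuousOn.mul
    · exact (continuousOn_const.mul ((continuousOn_const.sub continuousOn_id).pow p))
    · exact hcont.mono (huIcc.trans Set.Ioo_subset_Icc_self)
  have hftc := intervalIntegral.integral_eq_sub_of_hasDerivAt hderiv hint
  have heq : (∫ t in x₀..x, ((x - t)^p / (Nat.factorial p)) * f t)
      = ∫ t in x₀..x, (((Nat.factorial p : ℝ))⁻¹ * (x - t) ^ p) • f t := by
    apply intervalIntegral.integral_congr
    intro t _
    simp only [smul_eq_mul]
    ring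
  rw [heq, hftc, taylorWithinEval_self]



lemma Qerr_nonneg (p : ℕ) (d : Fin (p+1) → ℝ) (v : Polynomial ℝ) : 0 ≤ Qerr p d v := by
  have h1 : 0 ≤ ∫ ξ in (-(1:ℝ)/2)..0, (v.eval ξ + fd p d ξ)^2 :=
    intervalIntegral.integral_nonneg (by norm_num) fun x _ => sq_nonneg _
  have h2 : 0 ≤ ∫ ξ in (0:ℝ)..(1/2), (v.eval ξ - fd p d ξ)^2 :=
    intervalIntegral.integral_nonneg (by norm_num) fun x _ => sq_nonneg _
  unfold Qerr; linarith

lemma Qform_le (p : ℕ) (d : Fin (p+1) → ℝ) (v : Polynomial ℝ) (hv : v.natDegree ≤ p) :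
    Qform p d ≤ Qerr p d v := by
  apply csInf_le
  · exact ⟨0, fun q hq => by obtain ⟨w, _, rfl⟩ := hq; exact Qerr_nonneg p d w⟩
  · exact ⟨v, hv, rfl⟩

noncomputable def Tpoly (p : ℕ) (u : ℝ → ℝ) (s : Set ℝ) (xi : ℝ) : Polynomial ℝ :=
  ∑ k ∈ Finset.range (p+1),
    Polynomial.C (iteratedDerivWithin k u s xi / (Nat.factorial k)) *
      (Polynomial.X - Polynomial.C xi)^k

lemma Tpoly_eval (p : ℕ) (u : ℝ → ℝ) (s : Set ℝ) (xi x : ℝ) :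
    (Tpoly p u s xi).eval x = taylorWithinEval u p s xi x := by
  rw [taylor_within_apply, Tpoly, Polynomial.eval_finset_sum]
  apply Finset.sum_congr rfl
  intro k _
  simp [smul_eq_mul]
  ring

lemma Tpoly_natDegree_le (p : ℕ) (u : ℝ → ℝ) (s : Set ℝ) (xi : ℝ) :
    (Tpoly p u s xi).natDegree ≤ p := by
  apply Polynomial.natDegree_sum_le_of_forall_le
  intro k hk
  refine (Polynomial.natDegree_C_mul_le _ _).trans ?_
  refine (Polynomial.natDegree_pow_le).trans ?_
  rw [Polynomial.natDegree_X_sub_C, mul_one]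
  exact Nat.lt_succ_iff.mp (Finset.mem_range.mp hk)

-- the key per-node inequality
lemma node_bound {p : ℕ} {a b h : ℝ} (hab : a < b) (hh : 0 < h) {u : ℝ → ℝ}
    (hu : ContDiffOn ℝ (p+1) u (Set.Icc a b)) (uR : ℝ → ℝ) {ql qr : Polynomial ℝ}
    (hql : ql.natDegree ≤ p) (hqr : qr.natDegree ≤ p) {xi : ℝ}
    (hl : ∀ x ∈ Set.Ioo (xi - h/2) xi, uR x = ql.eval x)
    (hr : ∀ x ∈ Set.Ioo xi (xi + h/2), uR x = qr.eval x) :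
    (h^(p+1))^2 * (h * Qform p (Dvec p h xi ql qr)) ≤
      ∫ x in (xi - h/2)..(xi + h/2),
        ((u x - uR x) + (taylorWithinEval u p (Set.Icc a b) xi x - u x))^2 := by
  have hne : h ≠ 0 := ne_of_gt hh
  have hpne : h^(p+1) ≠ 0 := pow_ne_zero _ hne
  set T : Polynomial ℝ := Tpoly p u (Set.Icc a b) xi with hT
  set w : Polynomial ℝ := T - Polynomial.C (1/2) * (ql + qr) with hw
  set v : Polynomial ℝ := Polynomial.C ((h^(p+1))⁻¹) *
    (w.comp (Polynomial.C xi + Polynomial.C h * Polynomial.X)) with hv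
  have hwdeg : w.natDegree ≤ p := by
    refine (Polynomial.natDegree_sub_le _ _).trans (max_le (Tpoly_natDegree_le _ _ _ _) ?_)
    exact (Polynomial.natDegree_C_mul_le _ _).trans
      ((Polynomial.natDegree_add_le _ _).trans (max_le hql hqr))
  have hvdeg : v.natDegree ≤ p := by
    refine (Polynomial.natDegree_C_mul_le _ _).trans
      ((Polynomial.natDegree_comp_le).trans ?_)
    have h1 : (Polynomial.C xi + Polynomial.C h * Polynomial.X).natDegree ≤ 1 := by
      refine (Polynomial.natDegree_add_le _ _).trans (max_le (by simp) ?_)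
      exact (Polynomial.natDegree_C_mul_le _ _).trans (by simp)
    calc w.natDegree * (Polynomial.C xi + Polynomial.C h * Polynomial.X).natDegree
        ≤ p * 1 := Nat.mul_le_mul hwdeg h1
      _ = p := mul_one p
  -- evaluation identities
  have hveval : ∀ ξ : ℝ, v.eval ξ = (h^(p+1))⁻¹ * w.eval (xi + h*ξ) := by
    intro ξ
    simp [hv, Polynomial.eval_comp]
  have hfd : ∀ ξ : ℝ, fd p (Dvec p h xi ql qr) ξ = (qr - ql).eval (xi + h*ξ) / (2*h^(p+1)) := by
    intro ξ
    have hrdeg : (qr - ql).natDegree ≤ p :=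
      (Polynomial.natDegree_sub_le _ _).trans (max_le hqr hql)
    rw [poly_taylor_expand (qr - ql) hrdeg xi (h*ξ)]
    unfold fd Dvec
    rw [← Fin.sum_univ_eq_sum_range (fun k => ((Polynomial.derivative^[k] (qr - ql)).eval xi) /
      (Nat.factorial k) * (h*ξ)^k) (p+1)]
    rw [Finset.mul_sum, Finset.sum_div]
    apply Finset.sum_congr rfl
    intro k _
    have hk : (k:ℕ) ≤ p := Nat.lt_succ_iff.mp k.isLt
    have hpow : h^(p+1-(k:ℕ)) * h^(k:ℕ) = h^(p+1) := by
      rw [← pow_add, Nat.sub_add_cancel (le_trans hk (Nat.le_succ p))]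
    have hsub : (Polynomial.derivative^[(k:ℕ)] (qr - ql)).eval xi =
        (Polynomial.derivative^[(k:ℕ)] qr).eval xi - (Polynomial.derivative^[(k:ℕ)] ql).eval xi := by
      rw [Polynomial.iterate_derivative_sub, Polynomial.eval_sub]
    rw [hsub]
    have hfac : ((Nat.factorial (k:ℕ)) : ℝ) ≠ 0 := Nat.cast_ne_zero.mpr (Nat.factorial_ne_zero _)
    have hhk : h^(p+1-(k:ℕ)) ≠ 0 := pow_ne_zero _ hne
    rw [← hpow, mul_pow]
    field_simp
  set D := Dvec p h xi ql qr with hD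
  have hc1 : ∀ ξ : ℝ, v.eval ξ + fd p D ξ = (T - ql).eval (xi + h*ξ) / h^(p+1) := by
    intro ξ
    rw [hveval ξ, hfd ξ]
    simp only [hw, Polynomial.eval_sub, Polynomial.eval_add, Polynomial.eval_mul,
      Polynomial.eval_C]
    field_simp
    ring
  have hc2 : ∀ ξ : ℝ, v.eval ξ - fd p D ξ = (T - qr).eval (xi + h*ξ) / h^(p+1) := by
    intro ξ
    rw [hveval ξ, hfd ξ]
    simp only [hw, Polynomial.eval_sub, Polynomial.eval_add, Polynomial.eval_mul,
      Polynomial.eval_C]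
    field_simp
    ring
  have hQ : Qform p D ≤ Qerr p D v := Qform_le _ _ v hvdeg
  set IL := ∫ x in (xi - h/2)..xi, ((T - ql).eval x)^2 with hIL
  set IR := ∫ x in xi..(xi + h/2), ((T - qr).eval x)^2 with hIR
  have hE1 : (∫ ξ in (-(1:ℝ)/2)..0, (v.eval ξ + fd p D ξ)^2)
      = h⁻¹ * (((h^(p+1))^2)⁻¹ * IL) := by
    have step1 : (∫ ξ in (-(1:ℝ)/2)..0, (v.eval ξ + fd p D ξ)^2)
        = ∫ ξ in (-(1:ℝ)/2)..0,
            (fun x => ((h^(p+1))^2)⁻¹ * ((T - ql).eval x)^2) (xi + h*ξ) := by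
      apply intervalIntegral.integral_congr
      intro ξ _
      simp only
      rw [hc1 ξ, div_pow]
      ring
    have e1 : xi + h*(-(1:ℝ)/2) = xi - h/2 := by ring
    have e2 : xi + h*(0:ℝ) = xi := by ring
    have final : (h⁻¹ • ∫ x in (xi + h*(-(1:ℝ)/2))..(xi + h*(0:ℝ)),
        (fun x => ((h^(p+1))^2)⁻¹ * ((T - ql).eval x)^2) x)
        = h⁻¹ * (((h^(p+1))^2)⁻¹ * IL) := by
      rw [e1, e2]
      simp only [smul_eq_mul]
      rw [intervalIntegral.integral_const_mul]
    exact step1.trans ((intervalIntegral.integral_comp_add_mul _ hne xi).trans final)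
  have hE2 : (∫ ξ in (0:ℝ)..(1/2), (v.eval ξ - fd p D ξ)^2)
      = h⁻¹ * (((h^(p+1))^2)⁻¹ * IR) := by
    have step1 : (∫ ξ in (0:ℝ)..(1/2), (v.eval ξ - fd p D ξ)^2)
        = ∫ ξ in (0:ℝ)..(1/2),
            (fun x => ((h^(p+1))^2)⁻¹ * ((T - qr).eval x)^2) (xi + h*ξ) := by
      apply intervalIntegral.integral_congr
      intro ξ _
      simp only
      rw [hc2 ξ, div_pow]
      ring
    have e1 : xi + h*(0:ℝ) = xi := by ring
    have e2 : xi + h*((1:ℝ)/2) = xi + h/2 := by ring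
    have final : (h⁻¹ • ∫ x in (xi + h*(0:ℝ))..(xi + h*((1:ℝ)/2)),
        (fun x => ((h^(p+1))^2)⁻¹ * ((T - qr).eval x)^2) x)
        = h⁻¹ * (((h^(p+1))^2)⁻¹ * IR) := by
      rw [e1, e2]
      simp only [smul_eq_mul]
      rw [intervalIntegral.integral_const_mul]
    exact step1.trans ((intervalIntegral.integral_comp_add_mul _ hne xi).trans final)
  have hQerr : Qerr p D v = h⁻¹ * (((h^(p+1))^2)⁻¹ * (IL + IR)) := by
    unfold Qerr
    rw [hE1, hE2]
    ring
  have hmain : (h^(p+1))^2 * (h * Qform p D) ≤ IL + IR := by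
    have h1 : (h^(p+1))^2 * (h * Qform p D) ≤ (h^(p+1))^2 * (h * Qerr p D v) := by
      apply mul_le_mul_of_nonneg_left _ (sq_nonneg _)
      exact mul_le_mul_of_nonneg_left hQ hh.le
    have h2 : (h^(p+1))^2 * (h * Qerr p D v) = IL + IR := by
      rw [hQerr]
      field_simp
    linarith
  -- identify IL and IR with the error integrals
  set E : ℝ → ℝ := fun x => (u x - uR x) + (taylorWithinEval u p (Set.Icc a b) xi x - u x)
    with hE
  have hIL' : IL = ∫ x in (xi - h/2)..xi, (E x)^2 := by
    apply intervalIntegral_congr_Ioo (by linarith)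
    intro x hx
    rw [hE]
    simp only [Polynomial.eval_sub, hT, Tpoly_eval]
    rw [hl x hx]
    ring
  have hIR' : IR = ∫ x in xi..(xi + h/2), (E x)^2 := by
    apply intervalIntegral_congr_Ioo (by linarith)
    intro x hx
    rw [hE]
    simp only [Polynomial.eval_sub, hT, Tpoly_eval]
    rw [hr x hx]
    ring
  have hintL : IntervalIntegrable (fun x => (E x)^2) volume (xi - h/2) xi := by
    apply intervalIntegrable_congr_Ioo (by linarith : xi - h/2 ≤ xi)
      (f := fun x => ((T - ql).eval x)^2)
    · intro x hx
      rw [hE]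
      simp only [Polynomial.eval_sub, hT, Tpoly_eval]
      rw [hl x hx]
      ring
    · exact (((T - ql).continuous.pow 2)).intervalIntegrable _ _
  have hintR : IntervalIntegrable (fun x => (E x)^2) volume xi (xi + h/2) := by
    apply intervalIntegrable_congr_Ioo (by linarith : xi ≤ xi + h/2)
      (f := fun x => ((T - qr).eval x)^2)
    · intro x hx
      rw [hE]
      simp only [Polynomial.eval_sub, hT, Tpoly_eval]
      rw [hr x hx]
      ring
    · exact (((T - qr).continuous.pow 2)).intervalIntegrable _ _
  have hadd : (∫ x in (xi - h/2)..xi, (E x)^2) + (∫ x in xi..(xi + h/2), (E x)^2)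
      = ∫ x in (xi - h/2)..(xi + h/2), (E x)^2 :=
    intervalIntegral.integral_add_adjacent_intervals hintL hintR
  calc (h^(p+1))^2 * (h * Qform p D) ≤ IL + IR := hmain
    _ = ∫ x in (xi - h/2)..(xi + h/2), (E x)^2 := by rw [hIL', hIR', hadd]
lemma cell_bound {p : ℕ} {a b h t : ℝ} (hab : a < b) (hh : 0 < h) (ht : 0 < t) {u : ℝ → ℝ}
    (hu : ContDiffOn ℝ (p+1) u (Set.Icc a b)) (uR : ℝ → ℝ) {ql qr : Polynomial ℝ}
    (hql : ql.natDegree ≤ p) (hqr : qr.natDegree ≤ p) {xi : ℝ}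
    (hsub : Set.Icc (xi - h/2) (xi + h/2) ⊆ Set.Ioo a b)
    (hl : ∀ x ∈ Set.Ioo (xi - h/2) xi, uR x = ql.eval x)
    (hr : ∀ x ∈ Set.Ioo xi (xi + h/2), uR x = qr.eval x)
    (he2int : IntervalIntegrable (fun x => (u x - uR x)^2) volume (xi - h/2) (xi + h/2)) :
    (h^(p+1))^2 * (h * Qform p (Dvec p h xi ql qr)) ≤
      (1+t) * (∫ x in (xi - h/2)..(xi + h/2), (u x - uR x)^2)
      + (1+1/t) * (((Nat.factorial p : ℝ)⁻¹ * h^(p+1))^2 *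
          ∫ x in (xi - h/2)..(xi + h/2),
            (iteratedDerivWithin (p+1) u (Set.Icc a b) x)^2) := by
  have hle : xi - h/2 ≤ xi + h/2 := by linarith
  have hl2 : xi - h/2 ≤ xi := by linarith
  have hr2 : xi ≤ xi + h/2 := by linarith
  have hxiIoo : xi ∈ Set.Ioo a b := hsub ⟨by linarith, by linarith⟩
  have hucont : ContinuousOn u (Set.Icc a b) := hu.continuousOn
  set f : ℝ → ℝ := iteratedDerivWithin (p+1) u (Set.Icc a b) with hfdef
  have hfcont : ContinuousOn f (Set.Icc a b) :=
    hu.continuousOn_iteratedDerivWithin le_rfl (uniqueDiffOn_Icc hab)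
  have husub : Set.uIcc (xi - h/2) (xi + h/2) ⊆ Set.Icc a b := by
    rw [Set.uIcc_of_le hle]
    exact fun x hx => Set.Ioo_subset_Icc_self (hsub hx)
  set P : Polynomial ℝ := Tpoly p u (Set.Icc a b) xi with hP
  have hPeval : ∀ x : ℝ, P.eval x = taylorWithinEval u p (Set.Icc a b) xi x :=
    fun x => Tpoly_eval p u (Set.Icc a b) xi x
  set g : ℝ → ℝ := fun x => P.eval x - u x with hg
  set E : ℝ → ℝ := fun x => (u x - uR x) + g x with hE
  set Bi : ℝ := ∫ x in (xi - h/2)..(xi + h/2), (f x)^2 with hBi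
  have hBnn : 0 ≤ Bi := intervalIntegral.integral_nonneg hle fun x _ => sq_nonneg _
  have nb : (h^(p+1))^2 * (h * Qform p (Dvec p h xi ql qr)) ≤
      ∫ x in (xi - h/2)..(xi + h/2), (E x)^2 := by
    refine (node_bound hab hh hu uR hql hqr hl hr).trans_eq ?_
    apply intervalIntegral.integral_congr
    intro x _
    rw [hE]
    simp only [hg, hPeval x]
  have hEl : IntervalIntegrable (fun x => (E x)^2) volume (xi - h/2) xi := by
    apply intervalIntegrable_congr_Ioo hl2 (f := fun x => (P.eval x - ql.eval x)^2)
    · intro x hx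
      simp only [hE, hg]
      rw [hl x hx]
      ring
    · exact ((P.continuous.sub ql.continuous).pow 2).intervalIntegrable _ _
  have hEr : IntervalIntegrable (fun x => (E x)^2) volume xi (xi + h/2) := by
    apply intervalIntegrable_congr_Ioo hr2 (f := fun x => (P.eval x - qr.eval x)^2)
    · intro x hx
      simp only [hE, hg]
      rw [hr x hx]
      ring
    · exact ((P.continuous.sub qr.continuous).pow 2).intervalIntegrable _ _
  have hE2int : IntervalIntegrable (fun x => (E x)^2) volume (xi - h/2) (xi + h/2) :=
    hEl.trans hEr
  have hg2cont : ContinuousOn (fun x => (g x)^2) (Set.Icc a b) :=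
    ((P.continuous.continuousOn.sub hucont).pow 2)
  have hg2int : IntervalIntegrable (fun x => (g x)^2) volume (xi - h/2) (xi + h/2) :=
    (hg2cont.mono husub).intervalIntegrable
  have step1 : (∫ x in (xi - h/2)..(xi + h/2), (E x)^2) ≤
      (1+t) * (∫ x in (xi - h/2)..(xi + h/2), (u x - uR x)^2)
      + (1+1/t) * (∫ x in (xi - h/2)..(xi + h/2), (g x)^2) := by
    have hmono : (∫ x in (xi - h/2)..(xi + h/2), (E x)^2) ≤
        ∫ x in (xi - h/2)..(xi + h/2), ((1+t) * (u x - uR x)^2 + (1+1/t) * (g x)^2) := by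
      apply intervalIntegral.integral_mono_on hle hE2int
        ((he2int.const_mul _).add (hg2int.const_mul _))
      intro x _
      have hkey : (1+t) * (u x - uR x)^2 + (1+1/t) * (g x)^2 - (E x)^2
          = (t*(u x - uR x) - g x)^2 / t := by
        rw [hE]
        field_simp
        ring
      nlinarith [div_nonneg (sq_nonneg (t*(u x - uR x) - g x)) ht.le]
    rw [intervalIntegral.integral_add (he2int.const_mul _) (hg2int.const_mul _),
      intervalIntegral.integral_const_mul, intervalIntegral.integral_const_mul] at hmono
    exact hmono
  set M : ℝ := (h^p / (Nat.factorial p)) * (Real.sqrt h * Real.sqrt Bi) with hM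
  have hfabs_int : IntervalIntegrable (fun x => |f x|) volume (xi - h/2) (xi + h/2) :=
    ((hfcont.abs).mono husub).intervalIntegrable
  have hf2_int : IntervalIntegrable (fun x => (f x)^2) volume (xi - h/2) (xi + h/2) :=
    ((hfcont.pow 2).mono husub).intervalIntegrable
  have hL1 : (∫ x in (xi - h/2)..(xi + h/2), |f x|) ≤ Real.sqrt h * Real.sqrt Bi := by
    have h0 := integral_abs_le_sqrt hle ((hfcont.mono husub).intervalIntegrable) hf2_int
    have heq : xi + h/2 - (xi - h/2) = h := by ring
    rwa [heq] at h0
  have hhp : (0:ℝ) ≤ h^p / (Nat.factorial p) := by positivity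
  have hgbound : ∀ x ∈ Set.Icc (xi - h/2) (xi + h/2), (g x)^2 ≤ M^2 := by
    intro x hx
    have hxIoo : x ∈ Set.Ioo a b := hsub hx
    have hrem := taylor_integral_remainder' hab hu hxiIoo hxIoo
    set W : ℝ → ℝ := fun s => ((x - s)^p / (Nat.factorial p)) * f s with hW
    have habs1 : |g x| = |∫ s in xi..x, W s| := by
      rw [hg]
      simp only
      rw [abs_sub_comm, hPeval x, hrem]
    have hWcont : ContinuousOn W (Set.Icc a b) :=
      ((((continuous_const.sub continuous_id).pow p).div_const _).continuousOn).mul hfcont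
    have huIcc : Set.uIcc xi x ⊆ Set.Icc a b :=
      (Set.OrdConnected.uIcc_subset Set.ordConnected_Ioo hxiIoo hxIoo).trans
        Set.Ioo_subset_Icc_self
    have hWint : IntervalIntegrable W volume xi x := (hWcont.mono huIcc).intervalIntegrable
    have hfabs_small : IntervalIntegrable (fun s => |f s|) volume xi x :=
      ((hfcont.abs).mono huIcc).intervalIntegrable
    have hWabs : ∀ s : ℝ, |x - s| ≤ h → |W s| ≤ (h^p / (Nat.factorial p)) * |f s| := by
      intro s hxs
      have e1 : |W s| = |x - s|^p / (Nat.factorial p) * |f s| := by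
        rw [hW]
        simp only
        rw [abs_mul, abs_div, abs_pow]
        congr 2
        exact abs_of_nonneg (by positivity)
      rw [e1]
      have : |x - s|^p ≤ h^p := pow_le_pow_left₀ (abs_nonneg _) hxs p
      gcongr
    have hcore : |∫ s in xi..x, W s| ≤
        (h^p / (Nat.factorial p)) * ∫ s in (xi - h/2)..(xi + h/2), |f s| := by
      rcases le_total xi x with hc | hc
      · have h1 : |∫ s in xi..x, W s| ≤ ∫ s in xi..x, |W s| :=
          intervalIntegral.abs_integral_le_integral_abs hc
        have h2 : (∫ s in xi..x, |W s|) ≤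
            ∫ s in xi..x, (h^p / (Nat.factorial p)) * |f s| := by
          apply intervalIntegral.integral_mono_on hc hWint.abs (hfabs_small.const_mul _)
          intro s hs
          apply hWabs
          rw [abs_le]
          constructor
          · linarith [hs.2, hx.1]
          · linarith [hs.1, hx.2]
        have h3 : (∫ s in xi..x, (h^p / (Nat.factorial p)) * |f s|)
            = (h^p / (Nat.factorial p)) * ∫ s in xi..x, |f s| :=
          intervalIntegral.integral_const_mul _ _
        have h4 : (∫ s in xi..x, |f s|) ≤ ∫ s in (xi - h/2)..(xi + h/2), |f s| :=
          integral_le_of_subinterval hl2 hc hx.2 (fun s => abs_nonneg _) hfabs_int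
        calc |∫ s in xi..x, W s| ≤ ∫ s in xi..x, |W s| := h1
          _ ≤ (h^p / (Nat.factorial p)) * ∫ s in xi..x, |f s| := h2.trans_eq h3
          _ ≤ _ := by gcongr
      · have hsymm : (∫ s in xi..x, W s) = -(∫ s in x..xi, W s) :=
          intervalIntegral.integral_symm x xi
        have h1 : |∫ s in xi..x, W s| ≤ ∫ s in x..xi, |W s| := by
          rw [hsymm, abs_neg]
          exact intervalIntegral.abs_integral_le_integral_abs hc
        have h2 : (∫ s in x..xi, |W s|) ≤
            ∫ s in x..xi, (h^p / (Nat.factorial p)) * |f s| := by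
          apply intervalIntegral.integral_mono_on hc hWint.symm.abs
            ((((hfcont.abs).mono (Set.uIcc_comm xi x ▸ huIcc)).intervalIntegrable).const_mul _)
          intro s hs
          apply hWabs
          rw [abs_le]
          constructor
          · linarith [hs.2, hx.1]
          · linarith [hs.1, hx.2]
        have h3 : (∫ s in x..xi, (h^p / (Nat.factorial p)) * |f s|)
            = (h^p / (Nat.factorial p)) * ∫ s in x..xi, |f s| :=
          intervalIntegral.integral_const_mul _ _
        have h4 : (∫ s in x..xi, |f s|) ≤ ∫ s in (xi - h/2)..(xi + h/2), |f s| :=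
          integral_le_of_subinterval hx.1 hc hr2 (fun s => abs_nonneg _) hfabs_int
        calc |∫ s in xi..x, W s| ≤ ∫ s in x..xi, |W s| := h1
          _ ≤ (h^p / (Nat.factorial p)) * ∫ s in x..xi, |f s| := h2.trans_eq h3
          _ ≤ _ := by gcongr
    have habs2 : |g x| ≤ M := by
      rw [habs1, hM]
      exact hcore.trans (mul_le_mul_of_nonneg_left hL1 hhp)
    nlinarith [abs_nonneg (g x), sq_abs (g x)]
  have hconst : (∫ x in (xi - h/2)..(xi + h/2), (g x)^2) ≤ h * M^2 := by
    have h0 : (∫ x in (xi - h/2)..(xi + h/2), (g x)^2) ≤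
        ∫ _x in (xi - h/2)..(xi + h/2), M^2 :=
      intervalIntegral.integral_mono_on hle hg2int intervalIntegrable_const hgbound
    rwa [intervalIntegral.integral_const, smul_eq_mul,
      (show xi + h/2 - (xi - h/2) = h by ring)] at h0
  have hM2 : h * M^2 = ((Nat.factorial p : ℝ)⁻¹ * h^(p+1))^2 * Bi := by
    have hfacne : ((Nat.factorial p : ℝ)) ≠ 0 := Nat.cast_ne_zero.mpr (Nat.factorial_ne_zero p)
    rw [hM, mul_pow, mul_pow, Real.sq_sqrt hh.le, Real.sq_sqrt hBnn, mul_pow, div_pow]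
    field_simp
    ring
  calc (h^(p+1))^2 * (h * Qform p (Dvec p h xi ql qr))
      ≤ ∫ x in (xi - h/2)..(xi + h/2), (E x)^2 := nb
    _ ≤ (1+t) * (∫ x in (xi - h/2)..(xi + h/2), (u x - uR x)^2)
        + (1+1/t) * (∫ x in (xi - h/2)..(xi + h/2), (g x)^2) := step1
    _ ≤ (1+t) * (∫ x in (xi - h/2)..(xi + h/2), (u x - uR x)^2)
        + (1+1/t) * (((Nat.factorial p : ℝ)⁻¹ * h^(p+1))^2 * Bi) := by
        have h1t : (0:ℝ) ≤ 1+1/t := by positivity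
        have := mul_le_mul_of_nonneg_left (hconst.trans_eq hM2) h1t
        linarith


lemma e2_integrable {a b h : ℝ} {N : ℕ} (hab : a < b) (hh : 0 < h)
    (hb : b = a + N * h) {u uR : ℝ → ℝ} (hucont : ContinuousOn u (Set.Icc a b))
    (q : ℕ → Polynomial ℝ)
    (hq : ∀ i < N, ∀ x ∈ Set.Ioo (a + i*h) (a + (i+1)*h), uR x = (q i).eval x) :
    IntervalIntegrable (fun x => (u x - uR x)^2) volume a b := by
  rw [intervalIntegrable_iff_integrableOn_Ioc_of_le hab.le]
  set G : ℝ → ℝ := fun x => ∑ i ∈ Finset.range N,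
    Set.indicator (Set.Ioo (a + i*h) (a + (i+1)*h)) (fun y => (u y - (q i).eval y)^2) x with hG
  have hGint : IntegrableOn G (Set.Ioc a b) := by
    apply integrable_finset_sum
    intro i hi
    apply MeasureTheory.Integrable.indicator _ measurableSet_Ioo
    have hc : ContinuousOn (fun y => (u y - (q i).eval y)^2) (Set.Icc a b) :=
      ((hucont.sub (Polynomial.continuous _).continuousOn).pow 2)
    exact (hc.integrableOn_Icc).mono_set Set.Ioc_subset_Icc_self
  apply hGint.congr
  rw [Filter.EventuallyEq, ae_restrict_iff' measurableSet_Ioc, ae_iff]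
  apply measure_mono_null (t := Set.range (fun i : ℕ => a + i*h))
  swap
  · exact (Set.countable_range _).measure_zero _
  intro x hx
  simp only [Set.mem_setOf_eq, _root_.not_imp] at hx
  obtain ⟨hmem, hne⟩ := hx
  by_contra hnx
  apply hne
  set i := ⌊(x-a)/h⌋₊ with hi
  have hxa : 0 < x - a := by linarith [hmem.1]
  have h1 : (i:ℝ) ≤ (x-a)/h := Nat.floor_le (by positivity)
  have h2 : (x-a)/h < i+1 := Nat.lt_floor_add_one _
  have hlow : a + i*h ≤ x := by
    have := (le_div_iff₀ hh).mp h1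
    linarith
  have hup : x < a + (i+1)*h := by
    have := (div_lt_iff₀ hh).mp h2
    push_cast
    linarith
  have hlow' : a + i*h < x := by
    rcases lt_or_eq_of_le hlow with h' | h'
    · exact h'
    · exact absurd h'.symm (fun hc => hnx ⟨i, hc.symm⟩)
  have hiN : i < N := by
    have : (i:ℝ)*h < N*h := by
      have hxb : x ≤ b := hmem.2
      rw [hb] at hxb
      linarith
    have : (i:ℝ) < N := lt_of_mul_lt_mul_right this hh.le
    exact_mod_cast this
  have hxIoo : x ∈ Set.Ioo (a + i*h) (a + (i+1)*h) := ⟨hlow', by push_cast at hup ⊢; linarith⟩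
  have hGx : G x = (u x - (q i).eval x)^2 := by
    rw [hG]
    simp only
    rw [Finset.sum_eq_single_of_mem i (Finset.mem_range.mpr hiN)]
    · rw [Set.indicator_of_mem hxIoo]
    · intro j hj hji
      apply Set.indicator_of_notMem
      rintro ⟨hj1, hj2⟩
      rcases lt_or_gt_of_ne hji with hlt | hgt
      · have : ((j:ℝ)+1) ≤ i := by exact_mod_cast Nat.succ_le_of_lt hlt
        have : a + ((j:ℝ)+1)*h ≤ a + i*h := by nlinarith
        push_cast at hj2
        linarith [hxIoo.1]
      · have : ((i:ℝ)+1) ≤ j := by exact_mod_cast Nat.succ_le_of_lt hgt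
        have : a + ((i:ℝ)+1)*h ≤ a + j*h := by nlinarith
        push_cast at hxIoo
        linarith [hxIoo.2]
  rw [hGx, hq i hiN x hxIoo]

set_option maxHeartbeats 1000000 in
/-- Theorem 2 of the paper, L² lower bound:
`‖u - u^R‖_{L²} ≥ h^{p+1} [ (Σᵢ h Q(Dᵢ))^{1/2} - C₂ |u|_{H^{p+1}} ]`. -/
theorem L2_lower_bound (p : ℕ) :
    ∃ C₂ : ℝ, 0 < C₂ ∧
      ∀ (a b : ℝ), a < b → ∀ N : ℕ, 0 < N → ∀ h : ℝ, h = (b - a) / N →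
      ∀ u : ℝ → ℝ, ContDiffOn ℝ (p+1) u (Set.Icc a b) →
      ∀ (uR : ℝ → ℝ) (q : ℕ → Polynomial ℝ),
        (∀ i < N, (q i).natDegree ≤ p) →
        (∀ i < N, ∀ x ∈ Set.Ioo (a + i*h) (a + (i+1)*h), uR x = (q i).eval x) →
        Real.sqrt (∫ x in a..b, (u x - uR x)^2) ≥
          h^(p+1) *
            (Real.sqrt (∑ i ∈ Finset.Ico 1 N,
                h * Qform p (Dvec p h (a + i*h) (q (i-1)) (q i)))
              - C₂ * Real.sqrt
                  (∫ x in a..b, (iteratedDerivWithin (p+1) u (Set.Icc a b) x)^2)) := by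
  refine ⟨(Nat.factorial p : ℝ)⁻¹, by positivity, ?_⟩
  intro a b hab N hN h hhdef u hu uR q hqdeg hq
  set C₂ : ℝ := (Nat.factorial p : ℝ)⁻¹ with hC2
  have hNR : (0:ℝ) < N := Nat.cast_pos.mpr hN
  have hh : 0 < h := by rw [hhdef]; exact div_pos (by linarith) hNR
  have hb : b = a + N * h := by rw [hhdef]; field_simp; ring
  set f : ℝ → ℝ := iteratedDerivWithin (p+1) u (Set.Icc a b) with hfdef
  set e2I : ℝ := ∫ x in a..b, (u x - uR x)^2 with he2I
  set fI : ℝ := ∫ x in a..b, (f x)^2 with hfI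
  set S : ℝ := ∑ i ∈ Finset.Ico 1 N, h * Qform p (Dvec p h (a + i*h) (q (i-1)) (q i)) with hS
  have hucont : ContinuousOn u (Set.Icc a b) := hu.continuousOn
  have he2int : IntervalIntegrable (fun x => (u x - uR x)^2) volume a b :=
    e2_integrable hab hh hb hucont q hq
  have hfcont : ContinuousOn f (Set.Icc a b) :=
    hu.continuousOn_iteratedDerivWithin le_rfl (uniqueDiffOn_Icc hab)
  have hf2int : IntervalIntegrable (fun x => (f x)^2) volume a b :=
    ((hfcont.pow 2).mono (Set.uIcc_of_le hab.le).subset).intervalIntegrable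
  have he2nn : 0 ≤ e2I := intervalIntegral.integral_nonneg hab.le fun x _ => sq_nonneg _
  have hfInn : 0 ≤ fI := intervalIntegral.integral_nonneg hab.le fun x _ => sq_nonneg _
  set c : ℕ → ℝ := fun i => a + i*h - h/2 with hc
  have hcsucc : ∀ i : ℕ, c (i+1) = c i + h := by
    intro i; rw [hc]; push_cast; ring
  have hac1 : a ≤ c 1 := by rw [hc]; push_cast; linarith
  have hcNb : c N ≤ b := by rw [hc, hb]; linarith
  have hc1N : c 1 ≤ c N := by
    rw [hc]; simp only
    have : (1:ℝ) ≤ N := by exact_mod_cast hN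
    nlinarith
  set X : ℝ := Real.sqrt e2I with hX
  set Y : ℝ := C₂ * h^(p+1) * Real.sqrt fI with hY
  have hXnn : 0 ≤ X := Real.sqrt_nonneg _
  have hYnn : 0 ≤ Y := by positivity
  -- the central estimate
  have key : (h^(p+1))^2 * S ≤ (X + Y)^2 := by
    apply opt_sq_le hXnn hYnn
    intro t ht
    -- per-cell bounds
    have cell : ∀ i ∈ Finset.Ico 1 N,
        (h^(p+1))^2 * (h * Qform p (Dvec p h (a + i*h) (q (i-1)) (q i))) ≤
          (1+t) * (∫ x in (c i)..(c (i+1)), (u x - uR x)^2)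
          + (1+1/t) * ((C₂ * h^(p+1))^2 * ∫ x in (c i)..(c (i+1)), (f x)^2) := by
      intro i hi
      obtain ⟨hi1, hiN⟩ := Finset.mem_Ico.mp hi
      set xi : ℝ := a + i*h with hxi
      have hi1R : (1:ℝ) ≤ (i:ℝ) := by exact_mod_cast hi1
      have hiNR : (i:ℝ) + 1 ≤ (N:ℝ) := by exact_mod_cast hiN
      have hecl : c i = xi - h/2 := by rw [hc, hxi]
      have hecr : c (i+1) = xi + h/2 := by rw [hc, hxi]; push_cast; ring
      have hsub : Set.Icc (xi - h/2) (xi + h/2) ⊆ Set.Ioo a b := by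
        intro x hx
        constructor
        · have : a + h/2 ≤ xi - h/2 := by rw [hxi]; nlinarith
          linarith [hx.1, hh]
        · have : xi + h/2 ≤ b - h/2 := by rw [hxi, hb]; nlinarith
          linarith [hx.2, hh]
      have hl : ∀ x ∈ Set.Ioo (xi - h/2) xi, uR x = (q (i-1)).eval x := by
        intro x hx
        have hcast : ((i-1 : ℕ) : ℝ) = (i:ℝ) - 1 := by
          have := Nat.cast_sub hi1 (R := ℝ)
          simpa using this
        apply hq (i-1) (lt_of_le_of_lt (Nat.sub_le i 1) hiN) x
        rw [hcast]
        constructor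
        · have : a + ((i:ℝ) - 1)*h ≤ xi - h/2 := by rw [hxi]; nlinarith
          linarith [hx.1]
        · have : a + (((i:ℝ) - 1) + 1)*h = xi := by rw [hxi]; ring
          rw [this]
          exact hx.2
      have hrr : ∀ x ∈ Set.Ioo xi (xi + h/2), uR x = (q i).eval x := by
        intro x hx
        apply hq i hiN x
        constructor
        · exact hx.1
        · have : xi + h/2 ≤ a + ((i:ℝ)+1)*h := by rw [hxi]; nlinarith
          linarith [hx.2]
      have heint : IntervalIntegrable (fun x => (u x - uR x)^2) volume (xi - h/2) (xi + h/2) := by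
        apply he2int.mono_set
        apply uIcc_sub_uIcc
        · have : a + h/2 ≤ xi - h/2 := by rw [hxi]; nlinarith
          linarith
        · linarith [hh]
        · have : xi + h/2 ≤ b - h/2 := by rw [hxi, hb]; nlinarith
          linarith [hh]
      have := cell_bound hab hh ht hu uR (hqdeg (i-1) (lt_of_le_of_lt (Nat.sub_le i 1) hiN))
        (hqdeg i hiN) hsub hl hrr heint
      rw [hecl, hecr, hC2]
      exact this
    -- sum the cell bounds
    have hsum : (h^(p+1))^2 * S ≤
        (1+t) * (∑ i ∈ Finset.Ico 1 N, ∫ x in (c i)..(c (i+1)), (u x - uR x)^2)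
        + (1+1/t) * ((C₂ * h^(p+1))^2 *
            ∑ i ∈ Finset.Ico 1 N, ∫ x in (c i)..(c (i+1)), (f x)^2) := by
      rw [hS, Finset.mul_sum]
      calc ∑ i ∈ Finset.Ico 1 N,
            (h^(p+1))^2 * (h * Qform p (Dvec p h (a + i*h) (q (i-1)) (q i)))
          ≤ ∑ i ∈ Finset.Ico 1 N,
            ((1+t) * (∫ x in (c i)..(c (i+1)), (u x - uR x)^2)
              + (1+1/t) * ((C₂ * h^(p+1))^2 * ∫ x in (c i)..(c (i+1)), (f x)^2)) :=
          Finset.sum_le_sum cell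
        _ = _ := by
          rw [Finset.sum_add_distrib, ← Finset.mul_sum, ← Finset.mul_sum, ← Finset.mul_sum]
    -- identify the sums as integrals
    have hesum : (∑ i ∈ Finset.Ico 1 N, ∫ x in (c i)..(c (i+1)), (u x - uR x)^2)
        = ∫ x in (c 1)..(c N), (u x - uR x)^2 := by
      apply intervalIntegral.sum_integral_adjacent_intervals_Ico hN
      intro k hk
      apply he2int.mono_set
      apply uIcc_sub_uIcc
      · obtain ⟨hk1, hkN⟩ := Set.mem_Ico.mp hk
        have : (1:ℝ) ≤ (k:ℝ) := by exact_mod_cast hk1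
        rw [hc]; simp only; nlinarith
      · linarith [hcsucc k, hh]
      · obtain ⟨hk1, hkN⟩ := Set.mem_Ico.mp hk
        have : ((k:ℝ)+1) ≤ (N:ℝ) := by exact_mod_cast hkN
        rw [hc, hb]; push_cast; nlinarith
    have hfsum : (∑ i ∈ Finset.Ico 1 N, ∫ x in (c i)..(c (i+1)), (f x)^2)
        = ∫ x in (c 1)..(c N), (f x)^2 := by
      apply intervalIntegral.sum_integral_adjacent_intervals_Ico hN
      intro k hk
      apply hf2int.mono_set
      apply uIcc_sub_uIcc
      · obtain ⟨hk1, hkN⟩ := Set.mem_Ico.mp hk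
        have : (1:ℝ) ≤ (k:ℝ) := by exact_mod_cast hk1
        rw [hc]; simp only; nlinarith
      · linarith [hcsucc k, hh]
      · obtain ⟨hk1, hkN⟩ := Set.mem_Ico.mp hk
        have : ((k:ℝ)+1) ≤ (N:ℝ) := by exact_mod_cast hkN
        rw [hc, hb]; push_cast; nlinarith
    have hele : (∫ x in (c 1)..(c N), (u x - uR x)^2) ≤ e2I :=
      integral_le_of_subinterval hac1 hc1N hcNb (fun x => sq_nonneg _) he2int
    have hfle : (∫ x in (c 1)..(c N), (f x)^2) ≤ fI :=
      integral_le_of_subinterval hac1 hc1N hcNb (fun x => sq_nonneg _) hf2int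
    have hX2 : X^2 = e2I := Real.sq_sqrt he2nn
    have hY2 : Y^2 = (C₂ * h^(p+1))^2 * fI := by
      rw [hY, mul_pow, Real.sq_sqrt hfInn]
    have h1t : (0:ℝ) ≤ 1+t := by linarith
    have h1t' : (0:ℝ) ≤ 1+1/t := by positivity
    have hC2h : (0:ℝ) ≤ (C₂ * h^(p+1))^2 := sq_nonneg _
    calc (h^(p+1))^2 * S
        ≤ (1+t) * (∑ i ∈ Finset.Ico 1 N, ∫ x in (c i)..(c (i+1)), (u x - uR x)^2)
          + (1+1/t) * ((C₂ * h^(p+1))^2 *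
              ∑ i ∈ Finset.Ico 1 N, ∫ x in (c i)..(c (i+1)), (f x)^2) := hsum
      _ ≤ (1+t) * e2I + (1+1/t) * ((C₂ * h^(p+1))^2 * fI) := by
          rw [hesum, hfsum]
          gcongr
      _ = (1+t) * X^2 + (1+1/t) * Y^2 := by rw [hX2, hY2]
  -- conclude
  have hfinal : h^(p+1) * Real.sqrt S ≤ X + Y := by
    have h1 : h^(p+1) * Real.sqrt S = Real.sqrt ((h^(p+1))^2 * S) := by
      rw [Real.sqrt_mul (sq_nonneg _), Real.sqrt_sq (by positivity : (0:ℝ) ≤ h^(p+1))]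
    rw [h1]
    calc Real.sqrt ((h^(p+1))^2 * S) ≤ Real.sqrt ((X+Y)^2) := Real.sqrt_le_sqrt key
      _ = X + Y := Real.sqrt_sq (by linarith)
  have hexpand : h^(p+1) * (Real.sqrt S - C₂ * Real.sqrt fI)
      = h^(p+1) * Real.sqrt S - Y := by rw [hY]; ring
  rw [ge_iff_le, hexpand]
  linarith
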